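/- Let R be a commutative ring, let s be a ring automorphism of R with s ∘ s = id, let R^s = {r ∈ R | s(r) = r} be its fixed subring, and let δ ∈ R be an element such that (1, δ) is a basis of R as an R^s-module. Consider the R-bimodule B := R ⊗_{R^s} R (left R-action on the first factor, right R-action on the second). Then the multiplication map μ : B → R, a⊗b ↦ ab, is a surjective morphism of R-bimodules, its kernel is a free left R-module of rank one generated by ξ := δ⊗1 − 1⊗δ, and ξ satisfies ξ·r = s(r)·ξ for every r ∈ R. -/

import Mathlib

open TensorProduct

/-- The subring of fixed points of a ring automorphism `s` of `R`. -/
def RingAut.fixedSubring {R : Type*} [CommRing R] (s : RingAut R) : Subring R where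
  carrier := {r : R | s r = r}
  zero_mem' := by simp
  one_mem' := by simp
  add_mem' := fun {a b} ha hb => by
    have ha' : s a = a := ha
    have hb' : s b = b := hb
    show s (a + b) = a + b
    rw [map_add, ha', hb']
  neg_mem' := fun {a} ha => by
    have ha' : s a = a := ha
    show s (-a) = -a
    rw [map_neg, ha']
  mul_mem' := fun {a b} ha hb => by
    have ha' : s a = a := ha
    have hb' : s b = b := hb
    show s (a * b) = a * b
    rw [map_mul, ha', hb']

/-!
Statement 6: Let `R` be a commutative ring, `s` a ring automorphism of `R` with `s ∘ s = id`,
`R^s` its fixed subring, and `δ ∈ R` such that `(1, δ)` is a basis of `R` as an `R^s`-module.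
Let `B := R ⊗_{R^s} R`, an `R`-bimodule where the left action of `r` is multiplication by
`r ⊗ 1` and the right action of `r` is multiplication by `1 ⊗ r`.  Then the multiplication map
`μ : B → R`, `a ⊗ b ↦ a * b`, is a surjective morphism of `R`-bimodules, its kernel is a free
left `R`-module of rank one generated by `ξ := δ ⊗ 1 - 1 ⊗ δ`, and `ξ · r = s(r) · ξ` for all
`r ∈ R`.
-/

set_option maxHeartbeats 2000000 in
theorem mult_map_kernel_free_rank_one
    {R : Type*} [CommRing R] (s : RingAut R) (hs : ∀ r : R, s (s r) = r)
    (δ : R)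
    (hδ : ∀ r : R, ∃! p : s.fixedSubring × s.fixedSubring, r = (p.1 : R) + (p.2 : R) * δ) :
    letI : Algebra s.fixedSubring R := s.fixedSubring.subtype.toAlgebra
    letI μ : R ⊗[s.fixedSubring] R →ₐ[s.fixedSubring] R :=
      Algebra.TensorProduct.lmul' s.fixedSubring
    letI ξ : R ⊗[s.fixedSubring] R := δ ⊗ₜ (1 : R) - (1 : R) ⊗ₜ δ
    Function.Surjective μ ∧
    (∀ (r : R) (x : R ⊗[s.fixedSubring] R), μ ((r ⊗ₜ (1 : R)) * x) = r * μ x) ∧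
    (∀ (r : R) (x : R ⊗[s.fixedSubring] R), μ (x * ((1 : R) ⊗ₜ r)) = μ x * r) ∧
    (∀ x : R ⊗[s.fixedSubring] R, μ x = 0 ↔ ∃ r : R, x = (r ⊗ₜ (1 : R)) * ξ) ∧
    (∀ r r' : R, (r ⊗ₜ (1 : R)) * ξ = (r' ⊗ₜ (1 : R)) * ξ → r = r') ∧
    (∀ r : R, ξ * ((1 : R) ⊗ₜ r) = ((s r) ⊗ₜ (1 : R)) * ξ) := by
  set F := s.fixedSubring with hF
  letI inst : Algebra F R := F.subtype.toAlgebra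
  show Function.Surjective (Algebra.TensorProduct.lmul' (S := R) F) ∧
    (∀ (r : R) (x : R ⊗[F] R),
      Algebra.TensorProduct.lmul' (S := R) F ((r ⊗ₜ (1 : R)) * x)
        = r * Algebra.TensorProduct.lmul' (S := R) F x) ∧
    (∀ (r : R) (x : R ⊗[F] R),
      Algebra.TensorProduct.lmul' (S := R) F (x * ((1 : R) ⊗ₜ r))
        = Algebra.TensorProduct.lmul' (S := R) F x * r) ∧
    (∀ x : R ⊗[F] R, Algebra.TensorProduct.lmul' (S := R) F x = 0 ↔
      ∃ r : R, x = (r ⊗ₜ (1 : R)) * (δ ⊗ₜ (1 : R) - (1 : R) ⊗ₜ δ)) ∧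
    (∀ r r' : R, (r ⊗ₜ (1 : R)) * (δ ⊗ₜ (1 : R) - (1 : R) ⊗ₜ δ)
        = (r' ⊗ₜ (1 : R)) * (δ ⊗ₜ (1 : R) - (1 : R) ⊗ₜ δ) → r = r') ∧
    (∀ r : R, (δ ⊗ₜ (1 : R) - (1 : R) ⊗ₜ δ) * ((1 : R) ⊗ₜ r)
        = ((s r) ⊗ₜ (1 : R)) * (δ ⊗ₜ (1 : R) - (1 : R) ⊗ₜ δ))
  have hfix : ∀ x : F, s (x : R) = (x : R) := fun x => x.2
  -- coordinates
  have hrep : ∀ r : R, ∃ p : F × F, r = (p.1 : R) + (p.2 : R) * δ := fun r => (hδ r).exists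
  choose c hc using hrep
  have hcu : ∀ (r p q : R), s p = p → s q = q → r = p + q * δ →
      p = ((c r).1 : R) ∧ q = ((c r).2 : R) := by
    intro r p q hp hq h
    have h2 : ((⟨p, hp⟩, ⟨q, hq⟩) : F × F) = c r := (hδ r).unique h (hc r)
    exact ⟨congrArg (fun z : F × F => (z.1 : R)) h2, congrArg (fun z : F × F => (z.2 : R)) h2⟩
  have hsm : ∀ (f : F) (x : R), f • x = (f : R) * x := fun _ _ => rfl
  -- the coordinate linear map
  obtain ⟨ψ, hψ⟩ : ∃ ψ : R ⊗[F] R →ₗ[F] R × R,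
      ∀ a b : R, ψ (a ⊗ₜ b) = (a * ((c b).1 : R), a * ((c b).2 : R)) := by
    refine ⟨TensorProduct.lift (LinearMap.mk₂ F
      (fun a b => (a * ((c b).1 : R), a * ((c b).2 : R))) ?_ ?_ ?_ ?_), fun a b => rfl⟩
    · intro a a' b; simp [Prod.ext_iff, add_mul]
    · intro f a b; simp [Prod.ext_iff, hsm, mul_assoc, Prod.smul_def]
    · intro a b b'
      have h1 : b + b' = (((c b).1 : R) + ((c b').1 : R)) + (((c b).2 : R) + ((c b').2 : R)) * δ := by
        linear_combination hc b + hc b'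
      obtain ⟨e1, e2⟩ := hcu (b + b') _ _
        (by rw [map_add, hfix, hfix]) (by rw [map_add, hfix, hfix]) h1
      simp only [Prod.mk_add_mk, Prod.ext_iff]
      constructor
      · rw [← e1]; ring
      · rw [← e2]; ring
    · intro f a b
      have h1 : (f : R) * b = ((f : R) * ((c b).1 : R)) + ((f : R) * ((c b).2 : R)) * δ := by
        linear_combination (f : R) * hc b
      obtain ⟨e1, e2⟩ := hcu ((f : R) * b) _ _
        (by rw [map_mul, hfix, hfix]) (by rw [map_mul, hfix, hfix]) h1
      rw [hsm f b]
      simp only [Prod.smul_def, Prod.mk.injEq, Prod.ext_iff, hsm]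
      constructor
      · rw [← e1]; ring
      · rw [← e2]; ring
  -- coordinates of 1 and δ
  obtain ⟨h11, h12⟩ := hcu 1 1 0 (map_one s) (map_zero s) (by ring)
  obtain ⟨h21, h22⟩ := hcu δ 0 1 (map_zero s) (map_one s) (by ring)
  -- swap fixed scalars across the tensor
  have hswap : ∀ (f a b : R), s f = f → a ⊗ₜ[F] (f * b) = (f * a) ⊗ₜ[F] b := by
    intro f a b hf
    rw [show f * b = (⟨f, hf⟩ : F) • b from rfl, tmul_smul, smul_tmul',
      show (⟨f, hf⟩ : F) • a = f * a from rfl]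
  -- canonical form
  have hexists : ∀ x : R ⊗[F] R, ∃ a b : R, x = a ⊗ₜ 1 + b ⊗ₜ δ := by
    intro x
    induction x with
    | zero => exact ⟨0, 0, by simp⟩
    | tmul a b =>
      refine ⟨a * ((c b).1 : R), a * ((c b).2 : R), ?_⟩
      conv_lhs => rw [hc b]
      rw [show ((c b).1 : R) + ((c b).2 : R) * δ
          = ((c b).1 : R) * 1 + ((c b).2 : R) * δ by ring]
      rw [tmul_add, hswap _ _ _ (hfix _), hswap _ _ _ (hfix _)]
      ring_nf
    | add x y hx hy =>
      obtain ⟨a, b, rfl⟩ := hx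
      obtain ⟨a', b', rfl⟩ := hy
      exact ⟨a + a', b + b', by rw [add_tmul, add_tmul]; abel⟩
  have hψbasis : ∀ a b : R, ψ (a ⊗ₜ 1 + b ⊗ₜ δ) = (a, b) := by
    intro a b
    rw [map_add, hψ, hψ, ← h11, ← h12, ← h21, ← h22]
    simp [Prod.ext_iff]
  have hinj : ∀ x y : R ⊗[F] R, ψ x = ψ y → x = y := by
    intro x y h
    obtain ⟨a, b, rfl⟩ := hexists x
    obtain ⟨a', b', rfl⟩ := hexists y
    rw [hψbasis, hψbasis, Prod.mk.injEq] at h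
    rw [h.1, h.2]
  -- s δ
  have hsδ : s δ = ((c (δ * δ)).2 : R) - δ := by
    have hfix1 : s (-(δ * s δ)) = -(δ * s δ) := by
      rw [map_neg, map_mul, hs δ, mul_comm]
    have hfix2 : s (δ + s δ) = δ + s δ := by rw [map_add, hs δ, add_comm]
    obtain ⟨e1, e2⟩ := hcu (δ * δ) (-(δ * s δ)) (δ + s δ) hfix1 hfix2 (by ring)
    rw [← e2]; ring
  refine ⟨?_, ?_, ?_, ?_, ?_, ?_⟩
  · intro r
    exact ⟨r ⊗ₜ 1, by rw [Algebra.TensorProduct.lmul'_apply_tmul]; ring⟩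
  · intro r x
    rw [map_mul, Algebra.TensorProduct.lmul'_apply_tmul]; ring
  · intro r x
    rw [map_mul, Algebra.TensorProduct.lmul'_apply_tmul]; ring
  · intro x
    constructor
    · intro hx
      obtain ⟨a, b, rfl⟩ := hexists x
      rw [map_add, Algebra.TensorProduct.lmul'_apply_tmul, Algebra.TensorProduct.lmul'_apply_tmul] at hx
      refine ⟨-b, hinj _ _ ?_⟩
      rw [hψbasis]
      simp only [mul_sub, Algebra.TensorProduct.tmul_mul_tmul, map_sub, hψ, one_mul, mul_one]
      rw [← h11, ← h12, ← h21, ← h22]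
      simp only [Prod.mk_sub_mk, Prod.ext_iff, Prod.mk.injEq]
      constructor
      · linear_combination hx
      · ring
    · rintro ⟨r, rfl⟩
      simp only [map_mul, map_sub, Algebra.TensorProduct.lmul'_apply_tmul]
      ring
  · intro r r' h
    have h2 : ψ ((r ⊗ₜ (1 : R)) * (δ ⊗ₜ (1 : R) - (1 : R) ⊗ₜ δ))
        = ψ ((r' ⊗ₜ (1 : R)) * (δ ⊗ₜ (1 : R) - (1 : R) ⊗ₜ δ)) := congrArg ψ h
    simp only [mul_sub, Algebra.TensorProduct.tmul_mul_tmul, map_sub, hψ,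
      one_mul, mul_one] at h2
    rw [← h11, ← h12, ← h21, ← h22] at h2
    simp only [Prod.mk_sub_mk, Prod.ext_iff, Prod.mk.injEq] at h2
    have := h2.2
    push_cast at this
    linear_combination -this
  · intro r
    set p : R := ((c r).1 : R) with hp
    set q : R := ((c r).2 : R) with hq
    set m : R := ((c (δ * δ)).1 : R) with hm
    set n : R := ((c (δ * δ)).2 : R) with hn
    have hpf : s p = p := hfix _
    have hqf : s q = q := hfix _
    have hmf : s m = m := hfix _
    have hnf : s n = n := hfix _
    have hδδ : δ * δ = m + n * δ := hc (δ * δ)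
    have hr : r = p + q * δ := hc r
    have hsr : s r = p + q * (n - δ) := by
      rw [hr, map_add, map_mul, hpf, hqf, hsδ]
    -- coordinates of δ * r
    have hδr : δ * r = q * m + (p + q * n) * δ := by
      linear_combination δ * hr + q * hδδ
    obtain ⟨e1, e2⟩ := hcu (δ * r) (q * m) (p + q * n)
      (by rw [map_mul, hqf, hmf]) (by rw [map_add, map_mul, hpf, hqf, hnf]) hδr
    apply hinj
    simp only [sub_mul, mul_sub, Algebra.TensorProduct.tmul_mul_tmul, map_sub, hψ,
      one_mul, mul_one]
    rw [← h11, ← h12, ← h21, ← h22, ← e1, ← e2]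
    simp only [Prod.mk_sub_mk, Prod.ext_iff, Prod.mk.injEq]
    constructor
    · rw [hsr]; linear_combination (q : R) * hδδ
    · rw [hsr]; ring
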